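/- If G is a simple graph on 12 vertices with exactly 30 edges, then t(G) + t(complement of G) + 80 = Σ_v C(d(v),2), where the sum runs over all 12 vertices and d(v) denotes the degree of v in G. -/

import Mathlib

open Finset

section helpers
variable {V : Type*} [Fintype V] [DecidableEq V]

lemma two_mul_choose_two' (n : ℕ) : n * (n - 1) = 2 * n.choose 2 := by
  cases n with
  | zero => simp
  | succ k =>
    have h2 : 2 ∣ (k + 1) * k := by
      rw [mul_comm]; exact (Nat.even_mul_succ_self k).two_dvd
    rw [Nat.choose_two_right, Nat.succ_sub_one, Nat.mul_div_cancel' h2]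

lemma count_two (hV : Fintype.card V = 12) (x y : V) (hxy : x ≠ y) :
    (∑ c : V, if x ≠ c ∧ y ≠ c then (1:ℕ) else 0) = 10 := by
  rw [← Finset.card_filter]
  have h : (univ.filter fun c => x ≠ c ∧ y ≠ c) = univ \ {x, y} := by
    ext c
    simp only [mem_filter, mem_univ, true_and, mem_sdiff, mem_insert, mem_singleton, not_or]
    exact ⟨fun ⟨h1, h2⟩ => ⟨fun e => h1 e.symm, fun e => h2 e.symm⟩,
      fun ⟨h1, h2⟩ => ⟨fun e => h1 e.symm, fun e => h2 e.symm⟩⟩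
  rw [h, card_sdiff_of_subset (subset_univ _), card_univ, hV, card_pair hxy]

lemma count_one (hV : Fintype.card V = 12) (x : V) :
    (∑ b : V, if x ≠ b then (1:ℕ) else 0) = 11 := by
  rw [← Finset.card_filter]
  have h : (univ.filter fun b => x ≠ b) = univ \ {x} := by
    ext b
    simp only [mem_filter, mem_univ, true_and, mem_sdiff, mem_singleton]
    exact ⟨fun h e => h e.symm, fun h e => h e.symm⟩
  rw [h, card_sdiff_of_subset (subset_univ _), card_univ, hV, card_singleton]

lemma count_deg (G : SimpleGraph V) [DecidableRel G.Adj] (a : V) :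
    (∑ b : V, if G.Adj a b then (1:ℕ) else 0) = G.degree a := by
  rw [← Finset.card_filter]
  congr 1
  ext b
  simp [SimpleGraph.mem_neighborFinset]

lemma count_deg_sub (G : SimpleGraph V) [DecidableRel G.Adj] (a b : V) (h : G.Adj a b) :
    (∑ c : V, if G.Adj a c ∧ b ≠ c then (1:ℕ) else 0) = G.degree a - 1 := by
  rw [← Finset.card_filter]
  have heq : (univ.filter fun c => G.Adj a c ∧ b ≠ c) = (G.neighborFinset a).erase b := by
    ext c
    simp only [mem_filter, mem_univ, true_and, mem_erase, SimpleGraph.mem_neighborFinset]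
    exact ⟨fun ⟨h1, h2⟩ => ⟨fun e => h2 e.symm, h1⟩, fun ⟨h1, h2⟩ => ⟨h2, fun e => h1 e.symm⟩⟩
  rw [heq, card_erase_of_mem (by simp [h]), SimpleGraph.degree]

lemma pair_sum (G : SimpleGraph V) [DecidableRel G.Adj] (a : V) :
    (∑ b : V, ∑ c : V, if b ≠ c ∧ G.Adj a b ∧ G.Adj a c then (1:ℕ) else 0)
      = G.degree a * (G.degree a - 1) := by
  have h1 : ∀ b : V, (∑ c : V, if b ≠ c ∧ G.Adj a b ∧ G.Adj a c then (1:ℕ) else 0)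
      = if G.Adj a b then G.degree a - 1 else 0 := by
    intro b
    by_cases hb : G.Adj a b
    · rw [if_pos hb, ← count_deg_sub G a b hb]
      exact Finset.sum_congr rfl fun c _ => if_congr
        ⟨fun ⟨u, _, v⟩ => ⟨v, u⟩, fun ⟨v, u⟩ => ⟨u, hb, v⟩⟩ rfl rfl
    · simp [hb]
  rw [Finset.sum_congr rfl fun b _ => h1 b]
  have : ∀ b : V, (if G.Adj a b then G.degree a - 1 else 0)
      = (if G.Adj a b then (1:ℕ) else 0) * (G.degree a - 1) := by
    intro b; by_cases hb : G.Adj a b <;> simp [hb]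
  rw [Finset.sum_congr rfl fun b _ => this b, ← Finset.sum_mul, count_deg]

lemma six_mul_triangles {V : Type*} [Fintype V] [DecidableEq V]
    (H : SimpleGraph V) [DecidableRel H.Adj] :
    ((Finset.univ : Finset (V × V × V)).filter
      fun p => H.Adj p.1 p.2.1 ∧ H.Adj p.1 p.2.2 ∧ H.Adj p.2.1 p.2.2).card
      = 6 * (H.cliqueFinset 3).card := by
  rw [Finset.card_eq_sum_card_fiberwise
    (f := fun p : V × V × V => ({p.1, p.2.1, p.2.2} : Finset V)) (t := H.cliqueFinset 3)
    (by
      rintro ⟨a, b, c⟩ hp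
      simp only [coe_filter, mem_filter, Set.mem_setOf_eq] at hp
      obtain ⟨-, hab, hac, hbc⟩ := hp
      rw [mem_coe, SimpleGraph.mem_cliqueFinset_iff]
      constructor
      · intro x hx y hy hxy
        simp only [coe_insert, Set.mem_insert_iff, coe_singleton, Set.mem_singleton_iff] at hx hy
        rcases hx with rfl | rfl | rfl <;> rcases hy with rfl | rfl | rfl <;>
          first | exact absurd rfl hxy | assumption | (exact hab.symm) | (exact hac.symm) | (exact hbc.symm)
      · rw [card_insert_of_notMem (by simp [hab.ne, hac.ne]),
          card_insert_of_notMem (by simp [hbc.ne]), card_singleton])]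
  rw [mul_comm, ← smul_eq_mul, ← Finset.sum_const]
  apply Finset.sum_congr rfl
  intro s hs
  rw [SimpleGraph.mem_cliqueFinset_iff] at hs
  obtain ⟨hclique, hcard⟩ := hs
  obtain ⟨a, b, c, hab, hac, hbc, rfl⟩ := Finset.card_eq_three.1 hcard
  have hadj : ∀ x ∈ ({a,b,c} : Finset V), ∀ y ∈ ({a,b,c} : Finset V), x ≠ y → H.Adj x y := by
    intro x hx y hy hxy
    exact hclique (by simpa using hx) (by simpa using hy) hxy
  have key : (Finset.univ.filter fun p : V × V × V =>
      (H.Adj p.1 p.2.1 ∧ H.Adj p.1 p.2.2 ∧ H.Adj p.2.1 p.2.2) ∧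
      ({p.1, p.2.1, p.2.2} : Finset V) = {a, b, c}) =
      {(a,b,c), (a,c,b), (b,a,c), (b,c,a), (c,a,b), (c,b,a)} := by
    ext ⟨x, y, z⟩
    simp only [mem_filter, mem_univ, true_and, mem_insert, mem_singleton, Prod.mk.injEq]
    constructor
    · rintro ⟨⟨hxy, hxz, hyz⟩, hset⟩
      have hx : x ∈ ({a,b,c} : Finset V) := hset ▸ (by simp)
      have hy : y ∈ ({a,b,c} : Finset V) := hset ▸ (by simp)
      have hz : z ∈ ({a,b,c} : Finset V) := hset ▸ (by simp)
      simp only [mem_insert, mem_singleton] at hx hy hz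
      have h1 := hxy.ne
      have h2 := hxz.ne
      have h3 := hyz.ne
      rcases hx with rfl | rfl | rfl <;> rcases hy with rfl | rfl | rfl <;>
        rcases hz with rfl | rfl | rfl <;> simp_all
    · have hA : ∀ x ∈ ({a,b,c} : Finset V), ∀ y ∈ ({a,b,c} : Finset V), ∀ z ∈ ({a,b,c} : Finset V),
        x ≠ y → x ≠ z → y ≠ z →
        (H.Adj x y ∧ H.Adj x z ∧ H.Adj y z) ∧ ({x, y, z} : Finset V) = {a, b, c} := by
        intro x hx y hy z hz h1 h2 h3
        refine ⟨⟨hadj x hx y hy h1, hadj x hx z hz h2, hadj y hy z hz h3⟩, ?_⟩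
        apply Finset.eq_of_subset_of_card_le
        · intro w hw
          simp only [mem_insert, mem_singleton] at hw
          rcases hw with rfl | rfl | rfl <;> assumption
        · rw [hcard, card_insert_of_notMem (by simp [h1, h2]),
            card_insert_of_notMem (by simp [h3]), card_singleton]
      have ma : a ∈ ({a,b,c} : Finset V) := by simp
      have mb : b ∈ ({a,b,c} : Finset V) := by simp
      have mc : c ∈ ({a,b,c} : Finset V) := by simp
      rintro (⟨rfl,rfl,rfl⟩|⟨rfl,rfl,rfl⟩|⟨rfl,rfl,rfl⟩|⟨rfl,rfl,rfl⟩|⟨rfl,rfl,rfl⟩|⟨rfl,rfl,rfl⟩)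
      · exact hA _ ma _ mb _ mc hab hac hbc
      · exact hA _ ma _ mc _ mb hac hab hbc.symm
      · exact hA _ mb _ ma _ mc hab.symm hbc hac
      · exact hA _ mb _ mc _ ma hbc hab.symm hac.symm
      · exact hA _ mc _ ma _ mb hac.symm hbc.symm hab
      · exact hA _ mc _ mb _ ma hbc.symm hac.symm hab.symm
  rw [Finset.filter_filter, key]
  rw [card_insert_of_notMem (by simp [Prod.ext_iff]; tauto),
    card_insert_of_notMem (by simp [Prod.ext_iff]; tauto),
    card_insert_of_notMem (by simp [Prod.ext_iff]; tauto),
    card_insert_of_notMem (by simp [Prod.ext_iff]; tauto),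
    card_insert_of_notMem (by simp [Prod.ext_iff]; tauto), card_singleton]

lemma tri_sum (H : SimpleGraph V) [DecidableRel H.Adj] :
    (∑ a : V, ∑ b : V, ∑ c : V, if H.Adj a b ∧ H.Adj a c ∧ H.Adj b c then (1:ℕ) else 0)
      = 6 * (H.cliqueFinset 3).card := by
  rw [← six_mul_triangles H, Finset.card_filter, Fintype.sum_prod_type]
  apply Finset.sum_congr rfl
  intro a _
  rw [Fintype.sum_prod_type]

lemma sum_adj_ten (G : SimpleGraph V) [DecidableRel G.Adj]
    (hdeg : ∑ v : V, G.degree v = 60) :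
    (∑ a : V, ∑ b : V, if G.Adj a b then (10:ℕ) else 0) = 600 := by
  have h1 : ∀ a : V, (∑ b : V, if G.Adj a b then (10:ℕ) else 0) = G.degree a * 10 := by
    intro a
    rw [← count_deg G a, Finset.sum_mul]
    exact Finset.sum_congr rfl fun b _ => by by_cases h : G.Adj a b <;> simp [h]
  rw [Finset.sum_congr rfl fun a _ => h1 a, ← Finset.sum_mul, hdeg]
  norm_num

lemma pointwise_id (G : SimpleGraph V) [DecidableRel G.Adj] (a b c : V) :
    ((if G.Adj a b ∧ G.Adj a c ∧ G.Adj b c then (1:ℕ) else 0)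
      + (if Gᶜ.Adj a b ∧ Gᶜ.Adj a c ∧ Gᶜ.Adj b c then 1 else 0)
      + (if (a ≠ b ∧ a ≠ c ∧ b ≠ c) ∧ G.Adj a b then 1 else 0)
      + (if (a ≠ b ∧ a ≠ c ∧ b ≠ c) ∧ G.Adj a c then 1 else 0)
      + (if (a ≠ b ∧ a ≠ c ∧ b ≠ c) ∧ G.Adj b c then 1 else 0))
    = (if a ≠ b ∧ a ≠ c ∧ b ≠ c then 1 else 0)
      + (if b ≠ c ∧ G.Adj a b ∧ G.Adj a c then 1 else 0)
      + (if a ≠ c ∧ G.Adj a b ∧ G.Adj b c then 1 else 0)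
      + (if a ≠ b ∧ G.Adj a c ∧ G.Adj b c then 1 else 0) := by
  simp only [SimpleGraph.compl_adj]
  by_cases h1 : a = b
  · subst h1
    simp [fun h : G.Adj a a => (G.irrefl h)]
  by_cases h2 : a = c
  · subst h2
    simp [fun h : G.Adj a a => (G.irrefl h), h1]
  by_cases h3 : b = c
  · subst h3
    simp [fun h : G.Adj b b => (G.irrefl h), h1, h2]
  by_cases hx : G.Adj a b <;> by_cases hy : G.Adj a c <;> by_cases hz : G.Adj b c <;>
    simp [h1, h2, h3, hx, hy, hz]

end helpers

theorem goodman_twelve {V : Type*} [Fintype V] [DecidableEq V]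
    (hV : Fintype.card V = 12)
    (G : SimpleGraph V) [DecidableRel G.Adj]
    (hm : G.edgeFinset.card = 30) :
    (G.cliqueFinset 3).card + (Gᶜ.cliqueFinset 3).card + 80 =
      ∑ v : V, (G.degree v).choose 2 := by
  have hdeg : ∑ v : V, G.degree v = 60 := by
    rw [SimpleGraph.sum_degrees_eq_twice_card_edges, hm]
  -- the big identity from summing pointwise_id
  have hpt : (∑ a : V, ∑ b : V, ∑ c : V, if G.Adj a b ∧ G.Adj a c ∧ G.Adj b c then (1:ℕ) else 0)
      + (∑ a : V, ∑ b : V, ∑ c : V, if Gᶜ.Adj a b ∧ Gᶜ.Adj a c ∧ Gᶜ.Adj b c then (1:ℕ) else 0)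
      + (∑ a : V, ∑ b : V, ∑ c : V, if (a ≠ b ∧ a ≠ c ∧ b ≠ c) ∧ G.Adj a b then (1:ℕ) else 0)
      + (∑ a : V, ∑ b : V, ∑ c : V, if (a ≠ b ∧ a ≠ c ∧ b ≠ c) ∧ G.Adj a c then (1:ℕ) else 0)
      + (∑ a : V, ∑ b : V, ∑ c : V, if (a ≠ b ∧ a ≠ c ∧ b ≠ c) ∧ G.Adj b c then (1:ℕ) else 0)
      = (∑ a : V, ∑ b : V, ∑ c : V, if a ≠ b ∧ a ≠ c ∧ b ≠ c then (1:ℕ) else 0)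
      + (∑ a : V, ∑ b : V, ∑ c : V, if b ≠ c ∧ G.Adj a b ∧ G.Adj a c then (1:ℕ) else 0)
      + (∑ a : V, ∑ b : V, ∑ c : V, if a ≠ c ∧ G.Adj a b ∧ G.Adj b c then (1:ℕ) else 0)
      + (∑ a : V, ∑ b : V, ∑ c : V, if a ≠ b ∧ G.Adj a c ∧ G.Adj b c then (1:ℕ) else 0) := by
    simp only [← Finset.sum_add_distrib]
    exact Finset.sum_congr rfl fun a _ => Finset.sum_congr rfl fun b _ =>
      Finset.sum_congr rfl fun c _ => pointwise_id G a b c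
  -- evaluate each of the nine sums
  have hS1 := tri_sum G
  have hS2 := tri_sum Gᶜ
  have hS3 : (∑ a : V, ∑ b : V, ∑ c : V,
      if (a ≠ b ∧ a ≠ c ∧ b ≠ c) ∧ G.Adj a b then (1:ℕ) else 0) = 600 := by
    have inner : ∀ a b : V, (∑ c : V, if (a ≠ b ∧ a ≠ c ∧ b ≠ c) ∧ G.Adj a b then (1:ℕ) else 0)
        = if G.Adj a b then 10 else 0 := by
      intro a b
      by_cases h : G.Adj a b
      · rw [if_pos h, ← count_two hV a b h.ne]
        exact Finset.sum_congr rfl fun c _ => if_congr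
          ⟨fun ⟨⟨_, u, v⟩, _⟩ => ⟨u, v⟩, fun ⟨u, v⟩ => ⟨⟨h.ne, u, v⟩, h⟩⟩ rfl rfl
      · simp [h]
    rw [Finset.sum_congr rfl fun a _ => Finset.sum_congr rfl fun b _ => inner a b]
    exact sum_adj_ten G hdeg
  have hS4 : (∑ a : V, ∑ b : V, ∑ c : V,
      if (a ≠ b ∧ a ≠ c ∧ b ≠ c) ∧ G.Adj a c then (1:ℕ) else 0) = 600 := by
    have swap : ∀ a : V, (∑ b : V, ∑ c : V,
        if (a ≠ b ∧ a ≠ c ∧ b ≠ c) ∧ G.Adj a c then (1:ℕ) else 0)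
        = ∑ c : V, ∑ b : V, if (a ≠ b ∧ a ≠ c ∧ b ≠ c) ∧ G.Adj a c then (1:ℕ) else 0 :=
      fun a => Finset.sum_comm
    rw [Finset.sum_congr rfl fun a _ => swap a]
    have inner : ∀ a c : V, (∑ b : V, if (a ≠ b ∧ a ≠ c ∧ b ≠ c) ∧ G.Adj a c then (1:ℕ) else 0)
        = if G.Adj a c then 10 else 0 := by
      intro a c
      by_cases h : G.Adj a c
      · rw [if_pos h, ← count_two hV a c h.ne]
        exact Finset.sum_congr rfl fun b _ => if_congr
          ⟨fun ⟨⟨u, _, w⟩, _⟩ => ⟨u, Ne.symm w⟩, fun ⟨u, w⟩ => ⟨⟨u, h.ne, Ne.symm w⟩, h⟩⟩ rfl rfl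
      · simp [h]
    rw [Finset.sum_congr rfl fun a _ => Finset.sum_congr rfl fun c _ => inner a c]
    exact sum_adj_ten G hdeg
  have hS5 : (∑ a : V, ∑ b : V, ∑ c : V,
      if (a ≠ b ∧ a ≠ c ∧ b ≠ c) ∧ G.Adj b c then (1:ℕ) else 0) = 600 := by
    rw [Finset.sum_comm]
    have swap : ∀ b : V, (∑ a : V, ∑ c : V,
        if (a ≠ b ∧ a ≠ c ∧ b ≠ c) ∧ G.Adj b c then (1:ℕ) else 0)
        = ∑ c : V, ∑ a : V, if (a ≠ b ∧ a ≠ c ∧ b ≠ c) ∧ G.Adj b c then (1:ℕ) else 0 :=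
      fun b => Finset.sum_comm
    rw [Finset.sum_congr rfl fun b _ => swap b]
    have inner : ∀ b c : V, (∑ a : V, if (a ≠ b ∧ a ≠ c ∧ b ≠ c) ∧ G.Adj b c then (1:ℕ) else 0)
        = if G.Adj b c then 10 else 0 := by
      intro b c
      by_cases h : G.Adj b c
      · rw [if_pos h, ← count_two hV b c h.ne]
        exact Finset.sum_congr rfl fun a _ => if_congr
          ⟨fun ⟨⟨u, v, _⟩, _⟩ => ⟨Ne.symm u, Ne.symm v⟩,
           fun ⟨u, v⟩ => ⟨⟨Ne.symm u, Ne.symm v, h.ne⟩, h⟩⟩ rfl rfl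
      · simp [h]
    rw [Finset.sum_congr rfl fun b _ => Finset.sum_congr rfl fun c _ => inner b c]
    exact sum_adj_ten G hdeg
  have hS6 : (∑ a : V, ∑ b : V, ∑ c : V,
      if a ≠ b ∧ a ≠ c ∧ b ≠ c then (1:ℕ) else 0) = 1320 := by
    have inner : ∀ a b : V, (∑ c : V, if a ≠ b ∧ a ≠ c ∧ b ≠ c then (1:ℕ) else 0)
        = if a ≠ b then 10 else 0 := by
      intro a b
      by_cases h : a ≠ b
      · rw [if_pos h, ← count_two hV a b h]
        exact Finset.sum_congr rfl fun c _ => if_congr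
          ⟨fun ⟨_, u, v⟩ => ⟨u, v⟩, fun ⟨u, v⟩ => ⟨h, u, v⟩⟩ rfl rfl
      · simp [h]
    rw [Finset.sum_congr rfl fun a _ => Finset.sum_congr rfl fun b _ => inner a b]
    have h2 : ∀ a : V, (∑ b : V, if a ≠ b then (10:ℕ) else 0) = 110 := by
      intro a
      have : (∑ b : V, if a ≠ b then (10:ℕ) else 0)
          = (∑ b : V, if a ≠ b then (1:ℕ) else 0) * 10 := by
        rw [Finset.sum_mul]
        exact Finset.sum_congr rfl fun b _ => by by_cases h : a ≠ b <;> simp [h]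
      rw [this, count_one hV a]
    rw [Finset.sum_congr rfl fun a _ => h2 a, Finset.sum_const, card_univ, hV]
    norm_num
  have hS7 : (∑ a : V, ∑ b : V, ∑ c : V,
      if b ≠ c ∧ G.Adj a b ∧ G.Adj a c then (1:ℕ) else 0)
      = ∑ v : V, G.degree v * (G.degree v - 1) :=
    Finset.sum_congr rfl fun a _ => pair_sum G a
  have hS8 : (∑ a : V, ∑ b : V, ∑ c : V,
      if a ≠ c ∧ G.Adj a b ∧ G.Adj b c then (1:ℕ) else 0)
      = ∑ v : V, G.degree v * (G.degree v - 1) := by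
    rw [Finset.sum_comm]
    refine Finset.sum_congr rfl fun b _ => ?_
    rw [← pair_sum G b]
    exact Finset.sum_congr rfl fun a _ => Finset.sum_congr rfl fun c _ =>
      if_congr (and_congr Iff.rfl (and_congr (G.adj_comm a b) Iff.rfl)) rfl rfl
  have hS9 : (∑ a : V, ∑ b : V, ∑ c : V,
      if a ≠ b ∧ G.Adj a c ∧ G.Adj b c then (1:ℕ) else 0)
      = ∑ v : V, G.degree v * (G.degree v - 1) := by
    have swap : ∀ a : V, (∑ b : V, ∑ c : V,
        if a ≠ b ∧ G.Adj a c ∧ G.Adj b c then (1:ℕ) else 0)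
        = ∑ c : V, ∑ b : V, if a ≠ b ∧ G.Adj a c ∧ G.Adj b c then (1:ℕ) else 0 :=
      fun a => Finset.sum_comm
    rw [Finset.sum_congr rfl fun a _ => swap a, Finset.sum_comm]
    refine Finset.sum_congr rfl fun c _ => ?_
    rw [← pair_sum G c]
    exact Finset.sum_congr rfl fun a _ => Finset.sum_congr rfl fun b _ =>
      if_congr (and_congr Iff.rfl (and_congr (G.adj_comm a c) (G.adj_comm b c))) rfl rfl
  have hX : (∑ v : V, G.degree v * (G.degree v - 1)) = 2 * ∑ v : V, (G.degree v).choose 2 := by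
    rw [Finset.mul_sum]
    exact Finset.sum_congr rfl fun v _ => two_mul_choose_two' _
  rw [hS1, hS2, hS3, hS4, hS5, hS6, hS7, hS8, hS9] at hpt
  omega
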